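/- Let R = ℚ[L, M, s, x, y] be the polynomial ring in five variables, and let D : R → R be the unique ℚ-linear derivation with D(L) = L·y, D(M) = M·s, D(s) = x·y, D(x) = x·y, D(y) = x·y. Then for every n ≥ 0, the n-th iterate satisfies Dⁿ(L·M) = L·M·A_{n+1}(x,y,s), where A_{n+1}(x,y,s) = Σ_{π ∈ S_{n+1}} x^{basc(π)} y^{des(π)} s^{suc(π)}. -/

import Mathlib

open Finset MvPolynomial

/-- The word `π(1)π(2)⋯π(n)` of a permutation, as a function on 0-based positions. -/
def permWord {n : ℕ} (π : Equiv.Perm (Fin n)) (i : ℕ) : ℕ :=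
  if h : i < n then ((π ⟨i, h⟩ : Fin n) : ℕ) + 1 else 0

/-- Number of descents. -/
def desNum {n : ℕ} (π : Equiv.Perm (Fin n)) : ℕ :=
  ((range (n - 1)).filter fun i => permWord π (i + 1) < permWord π i).card

/-- Number of big ascents. -/
def bascNum {n : ℕ} (π : Equiv.Perm (Fin n)) : ℕ :=
  ((range (n - 1)).filter fun i => permWord π i + 2 ≤ permWord π (i + 1)).card

/-- Number of successions. -/
def sucNum {n : ℕ} (π : Equiv.Perm (Fin n)) : ℕ :=
  ((range (n - 1)).filter fun i => permWord π (i + 1) = permWord π i + 1).card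

/-- In `R = ℚ[L,M,s,x,y]` with `L = X 0`, `M = X 1`, `s = X 2`, `x = X 3`, `y = X 4`:
the trivariate Eulerian polynomial `A_m(x,y,s) = Σ_{π ∈ S_m} x^{basc π} y^{des π} s^{suc π}`. -/
noncomputable def trivEuler (m : ℕ) : MvPolynomial (Fin 5) ℚ :=
  ∑ π : Equiv.Perm (Fin m), X 3 ^ bascNum π * X 4 ^ desNum π * X 2 ^ sucNum π

namespace Stmt8Aux

abbrev R5 : Type := MvPolynomial (Fin 5) ℚ

noncomputable def mono {m : ℕ} (π : Equiv.Perm (Fin m)) : R5 :=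
  X 3 ^ bascNum π * X 4 ^ desNum π * X 2 ^ sucNum π

lemma trivEuler_eq_sum_mono (m : ℕ) : trivEuler m = ∑ π : Equiv.Perm (Fin m), mono π := rfl

/-! ### The insertion bijection -/

def insPerm {m : ℕ} (σ : Equiv.Perm (Fin m)) (p : Fin (m+1)) : Equiv.Perm (Fin (m+1)) :=
  (finSuccEquiv' p).trans ((Equiv.optionCongr σ).trans (finSuccEquiv' (Fin.last m)).symm)

lemma insPerm_at {m : ℕ} (σ : Equiv.Perm (Fin m)) (p : Fin (m+1)) :
    insPerm σ p p = Fin.last m := by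
  simp [insPerm, finSuccEquiv'_at, finSuccEquiv'_symm_none]

lemma insPerm_succAbove {m : ℕ} (σ : Equiv.Perm (Fin m)) (p : Fin (m+1)) (j : Fin m) :
    insPerm σ p (p.succAbove j) = (σ j).castSucc := by
  simp [insPerm, finSuccEquiv'_succAbove, finSuccEquiv'_symm_some, Fin.succAbove_last]

def insW (w : ℕ → ℕ) (p v : ℕ) (i : ℕ) : ℕ :=
  if i < p then w i else if i = p then v else w (i-1)

lemma permWord_insPerm {m : ℕ} (σ : Equiv.Perm (Fin m)) (p : Fin (m+1)) (i : ℕ) :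
    permWord (insPerm σ p) i = insW (permWord σ) p (m+1) i := by
  unfold insW
  by_cases hi : i < m + 1
  · rcases lt_trichotomy i (p : ℕ) with h | h | h
    · have him : i < m := lt_of_lt_of_le h (Nat.lt_succ_iff.mp p.isLt)
      rw [if_pos h]
      have hfin : (⟨i, hi⟩ : Fin (m+1)) = p.succAbove ⟨i, him⟩ := by
        rw [Fin.succAbove_of_castSucc_lt]
        · rfl
        · exact h
      simp only [permWord, dif_pos hi, dif_pos him, hfin, insPerm_succAbove]
      simp
    · rw [if_neg (by omega), if_pos h]
      have hfin : (⟨i, hi⟩ : Fin (m+1)) = p := Fin.ext h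
      simp [permWord, dif_pos hi, hfin, insPerm_at]
      omega
    · have h1 : 1 ≤ i := by omega
      have him : i - 1 < m := by omega
      rw [if_neg (by omega), if_neg (by omega)]
      have hfin : (⟨i, hi⟩ : Fin (m+1)) = p.succAbove ⟨i - 1, him⟩ := by
        rw [Fin.succAbove_of_le_castSucc]
        · ext; simp [Fin.val_succ]; omega
        · rw [Fin.le_castSucc_iff]
          simp [Fin.lt_def]; omega
      simp only [permWord, dif_pos hi, dif_pos him, hfin, insPerm_succAbove]
      simp
  · have h2 : ¬ i - 1 < m := by omega
    rw [if_neg (by omega), if_neg (by omega)]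
    simp [permWord, dif_neg hi, h2]
    omega

lemma insPerm_injective (m : ℕ) :
    Function.Injective (fun x : Equiv.Perm (Fin m) × Fin (m+1) => insPerm x.1 x.2) := by
  rintro ⟨σ, p⟩ ⟨σ', p'⟩ h
  simp only at h
  have hp : p = p' := by
    have h1 : insPerm σ p p = Fin.last m := insPerm_at σ p
    have h2 : insPerm σ' p' p' = Fin.last m := insPerm_at σ' p'
    have h3 : insPerm σ p p' = Fin.last m := by rw [h]; exact h2
    exact (insPerm σ p).injective (h1.trans h3.symm)
  subst hp
  have hσ : σ = σ' := by
    ext j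
    have h1 := insPerm_succAbove σ p j
    have h2 := insPerm_succAbove σ' p j
    rw [h] at h1
    exact congrArg Fin.val (Fin.castSucc_injective m (h1.symm.trans h2))
  simp [hσ]

lemma sum_insPerm {m : ℕ} (f : Equiv.Perm (Fin (m+1)) → R5) :
    ∑ τ : Equiv.Perm (Fin (m+1)), f τ
      = ∑ σ : Equiv.Perm (Fin m), ∑ p : Fin (m+1), f (insPerm σ p) := by
  have hbij : Function.Bijective
      (fun x : Equiv.Perm (Fin m) × Fin (m+1) => insPerm x.1 x.2) := by
    rw [Fintype.bijective_iff_injective_and_card]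
    refine ⟨insPerm_injective m, ?_⟩
    simp [Fintype.card_perm, Nat.factorial_succ, mul_comm]
  rw [← Fintype.sum_prod_type']
  exact (Fintype.sum_bijective _ hbij _ _ fun x => rfl).symm

/-! ### Pair counting -/

def fD (x y : ℕ) : ℕ := if y < x then 1 else 0
def fB (x y : ℕ) : ℕ := if x + 2 ≤ y then 1 else 0
def fS (x y : ℕ) : ℕ := if y = x + 1 then 1 else 0

def pairCnt (f : ℕ → ℕ → ℕ) (w : ℕ → ℕ) (k : ℕ) : ℕ :=
  ∑ i ∈ range k, f (w i) (w (i+1))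

lemma pairCnt_insW_zero (f : ℕ → ℕ → ℕ) (w : ℕ → ℕ) (v m : ℕ) :
    pairCnt f (insW w 0 v) (m+1) = f v (w 0) + pairCnt f w m := by
  unfold pairCnt
  rw [Finset.sum_range_succ']
  have h0 : f (insW w 0 v 0) (insW w 0 v 1) = f v (w 0) := by simp [insW]
  have hs : ∀ i, f (insW w 0 v (i+1)) (insW w 0 v (i+2)) = f (w i) (w (i+1)) := by
    intro i; simp [insW]
  simp only [h0, hs]
  omega

lemma pairCnt_insW_succ (f : ℕ → ℕ → ℕ) (w : ℕ → ℕ) (v : ℕ) {m j : ℕ} (hj : j < m) :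
    pairCnt f (insW w (j+1) v) (m+1) + f (w j) (w (j+1))
      = pairCnt f w m + (f (w j) v + f v (w (j+1))) := by
  set u := insW w (j+1) v with hu
  have hu_lt : ∀ i, i < j + 1 → u i = w i := by
    intro i hi; simp [hu, insW, hi]
  have hu_eq : u (j+1) = v := by simp [hu, insW]
  have hu_gt : ∀ i, j + 1 < i → u i = w (i-1) := by
    intro i hi; simp only [hu, insW]; rw [if_neg (by omega), if_neg (by omega)]
  unfold pairCnt
  have A : ∑ i ∈ range (m+1), f (u i) (u (i+1))
      = ∑ i ∈ range (j+2), f (u i) (u (i+1)) + ∑ i ∈ Ico (j+2) (m+1), f (u i) (u (i+1)) := by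
    simp only [range_eq_Ico]
    exact (Finset.sum_Ico_consecutive _ (Nat.zero_le _) (by omega)).symm
  have A' : ∑ i ∈ range m, f (w i) (w (i+1))
      = ∑ i ∈ range (j+1), f (w i) (w (i+1)) + ∑ i ∈ Ico (j+1) m, f (w i) (w (i+1)) := by
    simp only [range_eq_Ico]
    exact (Finset.sum_Ico_consecutive _ (Nat.zero_le _) (by omega)).symm
  have B : ∑ i ∈ Ico (j+2) (m+1), f (u i) (u (i+1))
      = ∑ i ∈ range (m - (j+1)), f (w (j+1+i)) (w (j+2+i)) := by
    rw [Finset.sum_Ico_eq_sum_range]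
    have hmm : m + 1 - (j+2) = m - (j+1) := by omega
    rw [hmm]
    refine Finset.sum_congr rfl fun i _ => ?_
    have e1 : u (j+2+i) = w (j+1+i) := by
      rw [hu_gt (j+2+i) (by omega)]
      exact congrArg w (by omega)
    have e2 : u (j+2+i+1) = w (j+2+i) := by
      rw [hu_gt (j+2+i+1) (by omega)]
      exact congrArg w (by omega)
    rw [e1, e2]
  have C : ∑ i ∈ Ico (j+1) m, f (w i) (w (i+1))
      = ∑ i ∈ range (m - (j+1)), f (w (j+1+i)) (w (j+2+i)) := by
    rw [Finset.sum_Ico_eq_sum_range]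
    refine Finset.sum_congr rfl fun i _ => ?_
    have e : j+1+i+1 = j+2+i := by omega
    rw [e]
  have Dfront : ∑ i ∈ range (j+2), f (u i) (u (i+1))
      = ∑ i ∈ range j, f (w i) (w (i+1)) + (f (w j) v + f v (w (j+1))) := by
    rw [Finset.sum_range_succ, Finset.sum_range_succ]
    have t1 : ∑ i ∈ range j, f (u i) (u (i+1)) = ∑ i ∈ range j, f (w i) (w (i+1)) := by
      refine Finset.sum_congr rfl fun i hi => ?_
      rw [mem_range] at hi
      rw [hu_lt i (by omega), hu_lt (i+1) (by omega)]
    have t2 : f (u j) (u (j+1)) = f (w j) v := by rw [hu_lt j (by omega), hu_eq]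
    have t3 : f (u (j+1)) (u (j+2)) = f v (w (j+1)) := by
      rw [hu_eq, hu_gt (j+2) (by omega)]
      norm_num
    rw [t1, t2, t3]; ring
  have Dfront' : ∑ i ∈ range (j+1), f (w i) (w (i+1))
      = ∑ i ∈ range j, f (w i) (w (i+1)) + f (w j) (w (j+1)) := Finset.sum_range_succ _ _
  rw [A, A', B, C, Dfront, Dfront']
  ring

/-! ### Word facts -/

lemma permWord_le {k : ℕ} (σ : Equiv.Perm (Fin (k+1))) (i : ℕ) : permWord σ i ≤ k+1 := by
  unfold permWord
  split
  · exact Nat.succ_le_succ (Fin.is_le _)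
  · omega

lemma permWord_pos {k : ℕ} (σ : Equiv.Perm (Fin (k+1))) {i : ℕ} (h : i < k+1) :
    1 ≤ permWord σ i := by
  unfold permWord; rw [dif_pos h]; omega

lemma permWord_zero {k : ℕ} (σ : Equiv.Perm (Fin (k+1))) {i : ℕ} (h : k+1 ≤ i) :
    permWord σ i = 0 := dif_neg (by omega)

lemma permWord_ne {k : ℕ} (σ : Equiv.Perm (Fin (k+1))) {j : ℕ} (h : j < k+1) :
    permWord σ (j+1) ≠ permWord σ j := by
  by_cases h2 : j+1 < k+1
  · intro he
    unfold permWord at he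
    rw [dif_pos h2, dif_pos h] at he
    have h3 : σ ⟨j+1, h2⟩ = σ ⟨j, h⟩ := Fin.ext (by omega)
    have h4 := σ.injective h3
    have h5 := congrArg Fin.val h4
    simp at h5
  · rw [permWord_zero σ (by omega)]
    have := permWord_pos σ h
    omega

/-! ### Sentinel lemmas -/

lemma pairCnt_des {k : ℕ} (σ : Equiv.Perm (Fin (k+1))) :
    pairCnt fD (permWord σ) (k+1) = desNum σ + 1 := by
  unfold pairCnt
  rw [Finset.sum_range_succ]
  have h1 : fD (permWord σ k) (permWord σ (k+1)) = 1 := by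
    unfold fD
    rw [permWord_zero σ (le_refl _)]
    have h0 : 0 < permWord σ k := permWord_pos σ (by omega)
    rw [if_pos h0]
  rw [h1, desNum, Finset.card_filter]
  simp [fD]

lemma pairCnt_basc {k : ℕ} (σ : Equiv.Perm (Fin (k+1))) :
    pairCnt fB (permWord σ) (k+1) = bascNum σ := by
  unfold pairCnt
  rw [Finset.sum_range_succ]
  have h1 : fB (permWord σ k) (permWord σ (k+1)) = 0 := by
    unfold fB
    rw [permWord_zero σ (le_refl _)]
    rw [if_neg (by omega)]
  rw [h1, bascNum, Finset.card_filter]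
  simp [fB]

lemma pairCnt_suc {k : ℕ} (σ : Equiv.Perm (Fin (k+1))) :
    pairCnt fS (permWord σ) (k+1) = sucNum σ := by
  unfold pairCnt
  rw [Finset.sum_range_succ]
  have h1 : fS (permWord σ k) (permWord σ (k+1)) = 0 := by
    unfold fS
    rw [permWord_zero σ (le_refl _)]
    rw [if_neg (by omega)]
  rw [h1, sucNum, Finset.card_filter]
  simp [fS]

/-! ### Statistics of insertions -/

lemma mono_ins_zero {k : ℕ} (σ : Equiv.Perm (Fin (k+1))) :
    mono (insPerm σ 0) = X 4 * mono σ := by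
  have hW : permWord (insPerm σ 0) = insW (permWord σ) 0 (k+2) :=
    funext fun i => permWord_insPerm σ 0 i
  have key : ∀ f : ℕ → ℕ → ℕ, pairCnt f (permWord (insPerm σ 0)) (k+2)
      = f (k+2) (permWord σ 0) + pairCnt f (permWord σ) (k+1) := by
    intro f
    rw [hW]
    exact pairCnt_insW_zero f (permWord σ) (k+2) (k+1)
  have hd := key fD
  have hb := key fB
  have hs := key fS
  rw [pairCnt_des, pairCnt_des, ] at hd
  rw [pairCnt_basc, pairCnt_basc] at hb
  rw [pairCnt_suc, pairCnt_suc] at hs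
  have hle := permWord_le σ 0
  have hd1 : fD (k+2) (permWord σ 0) = 1 := if_pos (by omega)
  have hb1 : fB (k+2) (permWord σ 0) = 0 := if_neg (by omega)
  have hs1 : fS (k+2) (permWord σ 0) = 0 := if_neg (by omega)
  rw [hd1] at hd
  rw [hb1] at hb
  rw [hs1] at hs
  have e1 : desNum (insPerm σ 0) = desNum σ + 1 := by omega
  have e2 : bascNum (insPerm σ 0) = bascNum σ := by omega
  have e3 : sucNum (insPerm σ 0) = sucNum σ := by omega
  unfold mono
  rw [e1, e2, e3, pow_succ]
  ring

lemma stats_ins_succ {k : ℕ} (σ : Equiv.Perm (Fin (k+1))) (i : Fin (k+1)) :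
    (desNum (insPerm σ i.succ) + fD (permWord σ i) (permWord σ (i+1)) = desNum σ + 1)
    ∧ (bascNum (insPerm σ i.succ) + fB (permWord σ i) (permWord σ (i+1))
        = bascNum σ + fB (permWord σ i) (k+2))
    ∧ (sucNum (insPerm σ i.succ) + fS (permWord σ i) (permWord σ (i+1))
        = sucNum σ + fS (permWord σ i) (k+2)) := by
  have hW : permWord (insPerm σ i.succ) = insW (permWord σ) ((i:ℕ)+1) (k+2) := by
    funext x
    have := permWord_insPerm σ i.succ x
    rwa [Fin.val_succ] at this
  have key : ∀ f : ℕ → ℕ → ℕ, pairCnt f (permWord (insPerm σ i.succ)) (k+2)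
        + f (permWord σ i) (permWord σ (i+1))
      = pairCnt f (permWord σ) (k+1)
        + (f (permWord σ i) (k+2) + f (k+2) (permWord σ (i+1))) := by
    intro f
    rw [hW]
    exact pairCnt_insW_succ f (permWord σ) (k+2) i.isLt
  have hd := key fD
  have hb := key fB
  have hs := key fS
  rw [pairCnt_des, pairCnt_des] at hd
  rw [pairCnt_basc, pairCnt_basc] at hb
  rw [pairCnt_suc, pairCnt_suc] at hs
  have hle1 := permWord_le σ ((i:ℕ)+1)
  have hle0 := permWord_le σ (i:ℕ)
  have hd1 : fD (permWord σ i) (k+2) = 0 := if_neg (by omega)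
  have hd2 : fD (k+2) (permWord σ (i+1)) = 1 := if_pos (by omega)
  have hb2 : fB (k+2) (permWord σ (i+1)) = 0 := if_neg (by omega)
  have hs2 : fS (k+2) (permWord σ (i+1)) = 0 := if_neg (by omega)
  rw [hd1, hd2] at hd
  rw [hb2] at hb
  rw [hs2] at hs
  exact ⟨by omega, by omega, by omega⟩

lemma mono_ins_succ {k : ℕ} (σ : Equiv.Perm (Fin (k+1))) (i : Fin (k+1)) :
    mono (insPerm σ i.succ) =
      if permWord σ ((i:ℕ)+1) < permWord σ i then
        (if permWord σ i = k+1 then X 2 * mono σ else X 3 * mono σ)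
      else if permWord σ ((i:ℕ)+1) = permWord σ i + 1 then
        X 3 * X 4 * (X 3 ^ bascNum σ * X 4 ^ desNum σ * X 2 ^ (sucNum σ - 1))
      else X 4 * mono σ := by
  obtain ⟨hd, hb, hsu⟩ := stats_ins_succ σ i
  have hle1 := permWord_le σ ((i:ℕ)+1)
  have hle0 := permWord_le σ (i:ℕ)
  have hpos := permWord_pos σ i.isLt
  have hne := permWord_ne σ i.isLt
  by_cases h1 : permWord σ ((i:ℕ)+1) < permWord σ i
  · rw [if_pos h1]
    have ed : fD (permWord σ i) (permWord σ ((i:ℕ)+1)) = 1 := if_pos h1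
    have eb : fB (permWord σ i) (permWord σ ((i:ℕ)+1)) = 0 := if_neg (by omega)
    have es : fS (permWord σ i) (permWord σ ((i:ℕ)+1)) = 0 := if_neg (by omega)
    rw [ed] at hd; rw [eb] at hb; rw [es] at hsu
    by_cases h2 : permWord σ (i:ℕ) = k+1
    · rw [if_pos h2]
      have eb2 : fB (permWord σ i) (k+2) = 0 := if_neg (by omega)
      have es2 : fS (permWord σ i) (k+2) = 1 := if_pos (by omega)
      rw [eb2] at hb; rw [es2] at hsu
      have e1 : desNum (insPerm σ i.succ) = desNum σ := by omega
      have e2 : bascNum (insPerm σ i.succ) = bascNum σ := by omega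
      have e3 : sucNum (insPerm σ i.succ) = sucNum σ + 1 := by omega
      unfold mono
      rw [e1, e2, e3, pow_succ]
      ring
    · rw [if_neg h2]
      have eb2 : fB (permWord σ i) (k+2) = 1 := if_pos (by omega)
      have es2 : fS (permWord σ i) (k+2) = 0 := if_neg (by omega)
      rw [eb2] at hb; rw [es2] at hsu
      have e1 : desNum (insPerm σ i.succ) = desNum σ := by omega
      have e2 : bascNum (insPerm σ i.succ) = bascNum σ + 1 := by omega
      have e3 : sucNum (insPerm σ i.succ) = sucNum σ := by omega
      unfold mono
      rw [e1, e2, e3, pow_succ]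
      ring
  · rw [if_neg h1]
    have hgt : permWord σ (i:ℕ) < permWord σ ((i:ℕ)+1) := by omega
    have h2 : permWord σ (i:ℕ) ≠ k+1 := by omega
    have ed : fD (permWord σ i) (permWord σ ((i:ℕ)+1)) = 0 := if_neg (by omega)
    have eb2 : fB (permWord σ i) (k+2) = 1 := if_pos (by omega)
    have es2 : fS (permWord σ i) (k+2) = 0 := if_neg (by omega)
    rw [ed] at hd; rw [eb2] at hb; rw [es2] at hsu
    by_cases h3 : permWord σ ((i:ℕ)+1) = permWord σ (i:ℕ) + 1
    · rw [if_pos h3]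
      have eb : fB (permWord σ i) (permWord σ ((i:ℕ)+1)) = 0 := if_neg (by omega)
      have es : fS (permWord σ i) (permWord σ ((i:ℕ)+1)) = 1 := if_pos (by omega)
      rw [eb] at hb; rw [es] at hsu
      have e1 : desNum (insPerm σ i.succ) = desNum σ + 1 := by omega
      have e2 : bascNum (insPerm σ i.succ) = bascNum σ + 1 := by omega
      have e3 : sucNum (insPerm σ i.succ) = sucNum σ - 1 := by omega
      unfold mono
      rw [e1, e2, e3, pow_succ, pow_succ]
      ring
    · rw [if_neg h3]
      have eb : fB (permWord σ i) (permWord σ ((i:ℕ)+1)) = 1 := if_pos (by omega)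
      have es : fS (permWord σ i) (permWord σ ((i:ℕ)+1)) = 0 := if_neg (by omega)
      rw [eb] at hb; rw [es] at hsu
      have e1 : desNum (insPerm σ i.succ) = desNum σ + 1 := by omega
      have e2 : bascNum (insPerm σ i.succ) = bascNum σ := by omega
      have e3 : sucNum (insPerm σ i.succ) = sucNum σ := by omega
      unfold mono
      rw [e1, e2, e3, pow_succ]
      ring

end Stmt8Aux
namespace Stmt8Aux

lemma card_filter_des {k : ℕ} (σ : Equiv.Perm (Fin (k+1))) :
    ((range (k+1)).filter fun j => permWord σ (j+1) < permWord σ j).card = desNum σ + 1 := by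
  have h := pairCnt_des σ
  unfold pairCnt fD at h
  rw [Finset.card_filter]
  exact h

lemma card_filter_suc {k : ℕ} (σ : Equiv.Perm (Fin (k+1))) :
    ((range (k+1)).filter fun j => permWord σ (j+1) = permWord σ j + 1).card = sucNum σ := by
  have h := pairCnt_suc σ
  unfold pairCnt fS at h
  rw [Finset.card_filter]
  exact h

lemma card_filter_basc {k : ℕ} (σ : Equiv.Perm (Fin (k+1))) :
    ((range (k+1)).filter fun j => permWord σ j + 2 ≤ permWord σ (j+1)).card = bascNum σ := by
  have h := pairCnt_basc σ
  unfold pairCnt fB at h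
  rw [Finset.card_filter]
  exact h

lemma max_filter_eq {k : ℕ} (σ : Equiv.Perm (Fin (k+1))) :
    (range (k+1)).filter (fun j => permWord σ j = k+1)
      = {((σ.symm ⟨k, by omega⟩ : Fin (k+1)) : ℕ)} := by
  ext j
  simp only [mem_filter, mem_range, mem_singleton]
  constructor
  · rintro ⟨hj, hw⟩
    unfold permWord at hw
    rw [dif_pos hj] at hw
    have h2 : σ ⟨j, hj⟩ = ⟨k, by omega⟩ := Fin.ext (by simp only [Fin.val_mk] at *; omega)
    have h3 := congrArg σ.symm h2
    rw [Equiv.symm_apply_apply] at h3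
    rw [← h3]
  · rintro rfl
    refine ⟨(σ.symm ⟨k, by omega⟩).isLt, ?_⟩
    unfold permWord
    rw [dif_pos (σ.symm ⟨k, by omega⟩).isLt]
    simp

lemma card_filter_max {k : ℕ} (σ : Equiv.Perm (Fin (k+1))) :
    ((range (k+1)).filter (fun j => permWord σ j = k+1)).card = 1 := by
  rw [max_filter_eq σ]
  exact Finset.card_singleton _

lemma sum_mono_ins {k : ℕ} (σ : Equiv.Perm (Fin (k+1))) :
    ∑ p : Fin (k+2), mono (insPerm σ p)
      = X 4 * mono σ + X 2 * mono σ
        + desNum σ • (X 3 * mono σ)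
        + sucNum σ • (X 3 * X 4 * (X 3 ^ bascNum σ * X 4 ^ desNum σ * X 2 ^ (sucNum σ - 1)))
        + bascNum σ • (X 4 * mono σ) := by
  rw [Fin.sum_univ_succ]
  rw [mono_ins_zero σ]
  set A : R5 := X 2 * mono σ with hA
  set B : R5 := X 3 * mono σ with hB
  set C : R5 := X 3 * X 4 * (X 3 ^ bascNum σ * X 4 ^ desNum σ * X 2 ^ (sucNum σ - 1)) with hC
  set Dd : R5 := X 4 * mono σ with hDd
  set F : ℕ → R5 := fun j =>
    if permWord σ (j+1) < permWord σ j then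
      (if permWord σ j = k+1 then A else B)
    else if permWord σ (j+1) = permWord σ j + 1 then C
    else Dd with hF
  have h1 : ∑ i : Fin (k+1), mono (insPerm σ i.succ) = ∑ j ∈ range (k+1), F j := by
    rw [← Fin.sum_univ_eq_sum_range]
    exact Finset.sum_congr rfl fun i _ => mono_ins_succ σ i
  rw [h1]
  set S := range (k+1) with hS
  set P1 : ℕ → Prop := fun j => permWord σ (j+1) < permWord σ j with hP1
  set P2 : ℕ → Prop := fun j => permWord σ j = k+1 with hP2
  set P3 : ℕ → Prop := fun j => permWord σ (j+1) = permWord σ j + 1 with hP3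
  have hsplit : ∑ j ∈ S, F j
      = ∑ j ∈ S.filter P1, F j + ∑ j ∈ S.filter (fun j => ¬ P1 j), F j :=
    (Finset.sum_filter_add_sum_filter_not S P1 F).symm
  have e1 : ∑ j ∈ S.filter P1, F j
      = ∑ j ∈ S.filter P1, (if P2 j then A else B) :=
    Finset.sum_congr rfl fun j hj => if_pos (Finset.mem_filter.mp hj).2
  have e2 : ∑ j ∈ S.filter (fun j => ¬ P1 j), F j
      = ∑ j ∈ S.filter (fun j => ¬ P1 j), (if P3 j then C else Dd) :=
    Finset.sum_congr rfl fun j hj => if_neg (Finset.mem_filter.mp hj).2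
  have e3 : ∑ j ∈ S.filter P1, (if P2 j then A else B)
      = ∑ j ∈ (S.filter P1).filter P2, A
        + ∑ j ∈ (S.filter P1).filter (fun j => ¬ P2 j), B := by
    rw [← Finset.sum_filter_add_sum_filter_not (S.filter P1) P2]
    congr 1
    · exact Finset.sum_congr rfl fun j hj => if_pos (Finset.mem_filter.mp hj).2
    · exact Finset.sum_congr rfl fun j hj => if_neg (Finset.mem_filter.mp hj).2
  have e4 : ∑ j ∈ S.filter (fun j => ¬ P1 j), (if P3 j then C else Dd)
      = ∑ j ∈ (S.filter (fun j => ¬ P1 j)).filter P3, C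
        + ∑ j ∈ (S.filter (fun j => ¬ P1 j)).filter (fun j => ¬ P3 j), Dd := by
    rw [← Finset.sum_filter_add_sum_filter_not (S.filter (fun j => ¬ P1 j)) P3]
    congr 1
    · exact Finset.sum_congr rfl fun j hj => if_pos (Finset.mem_filter.mp hj).2
    · exact Finset.sum_congr rfl fun j hj => if_neg (Finset.mem_filter.mp hj).2
  -- card computations
  have hc1 : (S.filter P1).filter P2 = S.filter P2 := by
    rw [Finset.filter_filter]
    apply Finset.filter_congr
    intro j hj
    rw [hS, mem_range] at hj
    have hne := permWord_ne σ hj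
    have hle := permWord_le σ (j+1)
    simp only [hP1, hP2]
    constructor
    · rintro ⟨_, h⟩; exact h
    · intro h; exact ⟨by omega, h⟩
  have hc2 : ((S.filter P1).filter P2).card = 1 := by
    rw [hc1]; exact card_filter_max σ
  have hc3 : (S.filter P1).card = desNum σ + 1 := card_filter_des σ
  have hc4 : ((S.filter P1).filter (fun j => ¬ P2 j)).card = desNum σ := by
    have := Finset.card_filter_add_card_filter_not (s := S.filter P1) (p := P2)
    omega
  have hc5 : (S.filter (fun j => ¬ P1 j)).filter P3 = S.filter P3 := by
    rw [Finset.filter_filter]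
    apply Finset.filter_congr
    intro j hj
    simp only [hP1, hP3]
    constructor
    · rintro ⟨_, h⟩; exact h
    · intro h; exact ⟨by omega, h⟩
  have hc6 : ((S.filter (fun j => ¬ P1 j)).filter P3).card = sucNum σ := by
    rw [hc5]; exact card_filter_suc σ
  have hc7 : (S.filter (fun j => ¬ P1 j)).filter (fun j => ¬ P3 j)
      = S.filter (fun j => permWord σ j + 2 ≤ permWord σ (j+1)) := by
    rw [Finset.filter_filter]
    apply Finset.filter_congr
    intro j hj
    rw [hS, mem_range] at hj
    have hne := permWord_ne σ hj
    simp only [hP1, hP3]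
    constructor
    · rintro ⟨h1, h2⟩; omega
    · intro h; constructor <;> omega
  have hc8 : ((S.filter (fun j => ¬ P1 j)).filter (fun j => ¬ P3 j)).card = bascNum σ := by
    rw [hc7]; exact card_filter_basc σ
  rw [hsplit, e1, e2, e3, e4]
  rw [Finset.sum_const, Finset.sum_const, Finset.sum_const, Finset.sum_const]
  rw [hc2, hc4, hc6, hc8]
  rw [one_smul]
  ring

end Stmt8Aux
namespace Stmt8Aux

lemma mono_identity {k : ℕ} (σ : Equiv.Perm (Fin (k+1))) :
    X 4 * mono σ + X 2 * mono σ + desNum σ • (X 3 * mono σ)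
      + sucNum σ • (X 3 * X 4 * (X 3 ^ bascNum σ * X 4 ^ desNum σ * X 2 ^ (sucNum σ - 1)))
      + bascNum σ • (X 4 * mono σ)
    = (X 2 + X 4) * mono σ
      + X 3 * X 4 * (pderiv 2 (mono σ) + pderiv 3 (mono σ) + pderiv 4 (mono σ)) := by
  have h32 : (3 : Fin 5) ≠ 2 := by decide
  have h42 : (4 : Fin 5) ≠ 2 := by decide
  have h23 : (2 : Fin 5) ≠ 3 := by decide
  have h43 : (4 : Fin 5) ≠ 3 := by decide
  have h24 : (2 : Fin 5) ≠ 4 := by decide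
  have h34 : (3 : Fin 5) ≠ 4 := by decide
  unfold mono
  generalize bascNum σ = b
  generalize desNum σ = d
  generalize sucNum σ = c
  simp only [pderiv_mul, pderiv_pow, pderiv_X_self, pderiv_X_of_ne h32, pderiv_X_of_ne h42,
    pderiv_X_of_ne h23, pderiv_X_of_ne h43, pderiv_X_of_ne h24, pderiv_X_of_ne h34,
    mul_zero, zero_mul, add_zero, zero_add, mul_one, nsmul_eq_mul]
  rcases b with _ | b <;> rcases d with _ | d <;> rcases c with _ | c <;>
    · push_cast
      simp only [Nat.succ_sub_one, pow_zero, pow_succ, Nat.zero_sub, Nat.cast_zero, zero_mul,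
        mul_zero, mul_one, add_zero, zero_add]
      ring

lemma trivEuler_rec (k : ℕ) :
    trivEuler (k+2) = (X 2 + X 4) * trivEuler (k+1)
      + X 3 * X 4 * (pderiv 2 (trivEuler (k+1)) + pderiv 3 (trivEuler (k+1))
        + pderiv 4 (trivEuler (k+1))) := by
  rw [trivEuler_eq_sum_mono (k+2), trivEuler_eq_sum_mono (k+1)]
  rw [show ((k+2 : ℕ)) = (k+1)+1 from rfl]
  rw [sum_insPerm mono]
  rw [Finset.sum_congr rfl (fun σ _ => (sum_mono_ins σ).trans (mono_identity σ))]
  rw [map_sum (pderiv 2), map_sum (pderiv 3), map_sum (pderiv 4)]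
  rw [Finset.mul_sum, ← Finset.sum_add_distrib, ← Finset.sum_add_distrib, Finset.mul_sum]
  exact Finset.sum_add_distrib

lemma trivEuler_one : trivEuler 1 = 1 := by
  rw [trivEuler]
  rw [Finset.univ_unique, Finset.sum_singleton]
  simp [desNum, bascNum, sucNum]

end Stmt8Aux
namespace Stmt8Aux

lemma pderiv_mono_zero {m : ℕ} (π : Equiv.Perm (Fin m)) :
    pderiv (0 : Fin 5) (mono π) = 0 ∧ pderiv (1 : Fin 5) (mono π) = 0 := by
  have h30 : (3 : Fin 5) ≠ 0 := by decide
  have h40 : (4 : Fin 5) ≠ 0 := by decide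
  have h20 : (2 : Fin 5) ≠ 0 := by decide
  have h31 : (3 : Fin 5) ≠ 1 := by decide
  have h41 : (4 : Fin 5) ≠ 1 := by decide
  have h21 : (2 : Fin 5) ≠ 1 := by decide
  unfold mono
  constructor <;>
    simp [pderiv_mul, pderiv_pow, pderiv_X_of_ne h30, pderiv_X_of_ne h40, pderiv_X_of_ne h20,
      pderiv_X_of_ne h31, pderiv_X_of_ne h41, pderiv_X_of_ne h21]

lemma pderiv_trivEuler_zero (m : ℕ) :
    pderiv (0 : Fin 5) (trivEuler m) = 0 ∧ pderiv (1 : Fin 5) (trivEuler m) = 0 := by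
  rw [trivEuler_eq_sum_mono, map_sum (pderiv 0), map_sum (pderiv 1)]
  constructor <;>
  · apply Finset.sum_eq_zero
    intro π _
    first
      | exact (pderiv_mono_zero π).1
      | exact (pderiv_mono_zero π).2

lemma trivEuler_one' : trivEuler 1 = 1 := trivEuler_one

end Stmt8Aux


open Stmt8Aux in
/-- If `D` is the ℚ-linear derivation of `ℚ[L,M,s,x,y]` with `D(L) = Ly`, `D(M) = Ms`,
`D(s) = xy`, `D(x) = xy`, `D(y) = xy`, then `Dⁿ(LM) = LM·A_{n+1}(x,y,s)` for all `n ≥ 0`. -/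
theorem stmt8
    (D : Derivation ℚ (MvPolynomial (Fin 5) ℚ) (MvPolynomial (Fin 5) ℚ))
    (hL : D (X 0) = X 0 * X 4) (hM : D (X 1) = X 1 * X 2)
    (hs : D (X 2) = X 3 * X 4) (hx : D (X 3) = X 3 * X 4) (hy : D (X 4) = X 3 * X 4)
    (n : ℕ) :
    (⇑D)^[n] (X 0 * X 1) = X 0 * X 1 * trivEuler (n + 1) := by
  have hDeq : D = (X 0 * X 4 : R5) • (pderiv (R := ℚ) (0 : Fin 5))
      + (X 1 * X 2 : R5) • pderiv (1 : Fin 5)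
      + (X 3 * X 4 : R5) • (pderiv (2 : Fin 5) + pderiv 3 + pderiv 4) := by
    apply MvPolynomial.derivation_ext
    intro i
    fin_cases i <;>
      simp [hL, hM, hs, hx, hy, Derivation.add_apply, Derivation.smul_apply,
        pderiv_X_self, pderiv_X_of_ne, smul_eq_mul, Pi.single_apply]
  induction n with
  | zero =>
    simp [trivEuler_one]
  | succ n ih =>
    rw [Function.iterate_succ_apply', ih]
    have h0 := (pderiv_trivEuler_zero (n+1)).1
    have h1 := (pderiv_trivEuler_zero (n+1)).2
    have h01 : (0 : Fin 5) ≠ 1 := by decide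
    have h10 : (1 : Fin 5) ≠ 0 := by decide
    have h02 : (0 : Fin 5) ≠ 2 := by decide
    have h12 : (1 : Fin 5) ≠ 2 := by decide
    have h03 : (0 : Fin 5) ≠ 3 := by decide
    have h13 : (1 : Fin 5) ≠ 3 := by decide
    have h04 : (0 : Fin 5) ≠ 4 := by decide
    have h14 : (1 : Fin 5) ≠ 4 := by decide
    rw [hDeq]
    simp only [Derivation.add_apply, Derivation.smul_apply, pderiv_mul, pderiv_X_self,
      pderiv_X_of_ne h01, pderiv_X_of_ne h10, pderiv_X_of_ne h02, pderiv_X_of_ne h12,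
      pderiv_X_of_ne h03, pderiv_X_of_ne h13, pderiv_X_of_ne h04, pderiv_X_of_ne h14,
      h0, h1, smul_eq_mul, mul_zero, zero_mul, add_zero, zero_add, mul_one, one_mul]
    rw [show n + 1 + 1 = n + 2 from rfl, trivEuler_rec n]
    ring
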